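/- Let [a,b] be a compact interval, let F and F̂ be continuous real-valued functions on [a,b], and let 𝔽 be a bounded measurable real-valued function on [a,b]. Assume: (3) F̂(a) = 𝔽(a) and F̂(b) = 𝔽(b); (4) F̂ is differentiable on (a,b) and its derivative is the restriction of an affine function x ↦ αx + β; (5) F is differentiable on (a,b) and its derivative is convex on (a,b); (6) for every r ∈ [a,b], ∫_r^b F̂(y) dy ≤ ∫_r^b 𝔽(y) dy. Then sup_{x ∈ [a,b]} (F̂(x) − F(x)) ≤ (3/2)·sup_{x ∈ [a,b]} (𝔽(x) − F(x)) − (1/2)·(𝔽(b) − F(b)). -/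

import Mathlib

open MeasureTheory Set

/-- Marshall-type lemma for convex density estimation, Lemma 1, first part:
under conditions (3)-(6), `sup (F̂ - F) ≤ (3/2) sup (𝔽 - F) - (1/2)(𝔽 - F)(b)` on `[a,b]`. -/
theorem marshall_lemma_sup
    (a b : ℝ) (hab : a < b) (F Fhat EDF : ℝ → ℝ)
    (hFcont : ContinuousOn F (Icc a b))
    (hFhatcont : ContinuousOn Fhat (Icc a b))
    (hmeas : AEMeasurable EDF (volume.restrict (Icc a b)))
    (hbdd : ∃ C : ℝ, ∀ x ∈ Icc a b, |EDF x| ≤ C)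
    (h3a : Fhat a = EDF a) (h3b : Fhat b = EDF b)
    (h4 : ∃ α β : ℝ, ∀ x ∈ Ioo a b, HasDerivAt Fhat (α * x + β) x)
    (h5 : ∃ f : ℝ → ℝ, (∀ x ∈ Ioo a b, HasDerivAt F (f x) x) ∧ ConvexOn ℝ (Ioo a b) f)
    (h6 : ∀ r ∈ Icc a b, ∫ y in r..b, Fhat y ≤ ∫ y in r..b, EDF y) :
    sSup ((fun x => Fhat x - F x) '' Icc a b) ≤
      (3 / 2) * sSup ((fun x => EDF x - F x) '' Icc a b) - (1 / 2) * (EDF b - F b) := by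
  obtain ⟨α, β, h4⟩ := h4
  obtain ⟨f, hF', hfconv⟩ := h5
  obtain ⟨C, hC⟩ := hbdd
  set D : ℝ → ℝ := fun x => Fhat x - F x with hDdef
  set M : ℝ := sSup ((fun x => EDF x - F x) '' Icc a b) with hMdef
  have hIcc : IsCompact (Icc a b) := isCompact_Icc
  have hne : (Icc a b).Nonempty := nonempty_Icc.2 hab.le
  obtain ⟨C', hC'⟩ := hIcc.exists_bound_of_continuousOn hFcont
  have hBdd : BddAbove ((fun x => EDF x - F x) '' Icc a b) := by
    refine ⟨C + C', ?_⟩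
    rintro y ⟨x, hx, rfl⟩
    have h1 := abs_le.1 (hC x hx)
    have h2 := abs_le.1 (by simpa [Real.norm_eq_abs] using hC' x hx)
    simp only
    linarith [h1.1, h1.2, h2.1, h2.2]
  have hMb : ∀ x ∈ Icc a b, EDF x - F x ≤ M := fun x hx => le_csSup hBdd ⟨x, hx, rfl⟩
  have hDcont : ContinuousOn D (Icc a b) := hFhatcont.sub hFcont
  obtain ⟨x₀, hx₀, hmax⟩ := hIcc.exists_isMaxOn hne hDcont
  have hMbb : EDF b - F b ≤ M := hMb b (right_mem_Icc.2 hab.le)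
  suffices h : D x₀ ≤ 3 / 2 * M - 1 / 2 * (EDF b - F b) by
    refine csSup_le (hne.image _) ?_
    rintro y ⟨x, hx, rfl⟩
    exact (hmax hx).trans h
  have hDb : D b = EDF b - F b := by simp only [hDdef, h3b]
  rcases eq_or_lt_of_le hx₀.1 with h0a | hax₀
  · have hDa : D x₀ = EDF a - F a := by rw [← h0a]; simp only [hDdef, h3a]
    have hMa : EDF a - F a ≤ M := hMb a (left_mem_Icc.2 hab.le)
    clear_value D M
    linarith
  rcases eq_or_lt_of_le hx₀.2 with h0b | hx₀b
  · rw [h0b, hDb]; clear_value M; linarith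
  -- interior case
  have hx₀mem : x₀ ∈ Ioo a b := ⟨hax₀, hx₀b⟩
  have hbx0 : (0:ℝ) < b - x₀ := sub_pos.2 hx₀b
  have hD' : ∀ x ∈ Ioo a b, HasDerivAt D (α * x + β - f x) x := fun x hx =>
    (h4 x hx).sub (hF' x hx)
  have hd0 : α * x₀ + β - f x₀ = 0 :=
    (hmax.isLocalMax (Icc_mem_nhds hax₀ hx₀b)).hasDerivAt_eq_zero (hD' x₀ hx₀mem)
  set c : ℝ := (D b - D x₀) / (b - x₀) ^ 2 with hcdef
  set g : ℝ → ℝ := fun t => D x₀ + c * (t - x₀) ^ 2 with hgdef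
  set p : ℝ → ℝ := fun x => α * x + β - f x - 2 * c * (x - x₀) with hpdef
  set ψ : ℝ → ℝ := fun t => D t - g t with hψdef
  have hψ' : ∀ t ∈ Ioo a b, HasDerivAt ψ (p t) t := by
    intro t ht
    have h1 : HasDerivAt (fun t : ℝ => (t - x₀) ^ 2) (2 * (t - x₀)) t := by
      simpa using ((hasDerivAt_id t).sub_const x₀).fun_pow 2
    have hg : HasDerivAt g (2 * c * (t - x₀)) t := by
      have := (h1.const_mul c).const_add (D x₀)
      exact this.congr_deriv (by ring)
    have := (hD' t ht).sub hg
    exact this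
  have hp0 : p x₀ = 0 := by
    simp only [hpdef, sub_self, mul_zero, sub_zero]
    exact hd0
  -- concavity consequence
  have hconc : ∀ u v : ℝ, v ∈ Ioo a b → x₀ < u → u < v →
      (u - x₀) / (v - x₀) * p v ≤ p u := by
    intro u v hv h1 h2
    have hvx : (0:ℝ) < v - x₀ := by linarith
    have hs : (0:ℝ) ≤ (v - u) / (v - x₀) := div_nonneg (by linarith) hvx.le
    have ht : (0:ℝ) ≤ (u - x₀) / (v - x₀) := div_nonneg (by linarith) hvx.le
    have hst : (v - u) / (v - x₀) + (u - x₀) / (v - x₀) = 1 := by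
      field_simp; ring
    have hfc := hfconv.2 hx₀mem hv hs ht hst
    simp only [smul_eq_mul] at hfc
    have hcomb : (v - u) / (v - x₀) * x₀ + (u - x₀) / (v - x₀) * v = u := by
      field_simp; ring
    rw [hcomb] at hfc
    rw [div_mul_eq_mul_div, div_mul_eq_mul_div, ← add_div, le_div_iff₀ hvx] at hfc
    -- hfc : f u * (v - x₀) ≤ (v-u) * f x₀ + (u - x₀) * f v
    rw [div_mul_eq_mul_div, div_le_iff₀ hvx]
    simp only [hpdef]
    have hd0' : (v - u) * (α * x₀ + β - f x₀) = 0 := by rw [hd0]; ring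
    nlinarith [hfc, hd0']
  have hψ0 : ψ x₀ = 0 := by simp [hψdef, hgdef]
  have hcb : c * (b - x₀) ^ 2 = D b - D x₀ := by
    rw [hcdef]; field_simp
  have hψb : ψ b = 0 := by
    simp only [hψdef, hgdef]
    rw [hcb]; ring
  have hψcont : ContinuousOn ψ (Icc a b) := by
    apply hDcont.sub
    exact (continuous_const.add (continuous_const.mul ((continuous_id.sub continuous_const).pow 2))).continuousOn
  have hψnn : ∀ t ∈ Icc x₀ b, 0 ≤ ψ t := by
    intro t ht
    rcases eq_or_lt_of_le ht.1 with rfl | h1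
    · exact hψ0.ge
    rcases eq_or_lt_of_le ht.2 with h2 | h2
    · rw [h2]; exact hψb.ge
    by_contra hneg
    push_neg at hneg
    have hsub1 : Icc x₀ t ⊆ Icc a b := Icc_subset_Icc hax₀.le h2.le
    have hsub2 : Icc t b ⊆ Icc a b := Icc_subset_Icc (by linarith) le_rfl
    obtain ⟨u, hu, hu'⟩ := exists_hasDerivAt_eq_slope ψ p h1 (hψcont.mono hsub1)
      (fun y hy => hψ' y ⟨by linarith [hy.1], by linarith [hy.2]⟩)
    obtain ⟨v, hv, hv'⟩ := exists_hasDerivAt_eq_slope ψ p h2 (hψcont.mono hsub2)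
      (fun y hy => hψ' y ⟨by linarith [hy.1], by linarith [hy.2]⟩)
    have hpu : p u < 0 := by
      rw [hu', hψ0]
      apply div_neg_of_neg_of_pos (by linarith) (by linarith)
    have hpv : 0 < p v := by
      rw [hv', hψb]
      apply div_pos (by linarith) (by linarith)
    have huv : u < v := by linarith [hu.2, hv.1]
    have hcc := hconc u v ⟨by linarith [hv.1], hv.2⟩ hu.1 huv
    have hpos : 0 < (u - x₀) / (v - x₀) := div_pos (by linarith [hu.1]) (by linarith [hu.1])
    have := mul_pos hpos hpv
    clear_value p ψ D M c g
    linarith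
  -- integrability
  have hsub' : uIcc x₀ b ⊆ Icc a b := by
    rw [uIcc_of_le hx₀b.le]; exact Icc_subset_Icc hx₀.1 le_rfl
  have hFint : IntervalIntegrable F volume x₀ b := (hFcont.mono hsub').intervalIntegrable
  have hFhatint : IntervalIntegrable Fhat volume x₀ b := (hFhatcont.mono hsub').intervalIntegrable
  have hDint : IntervalIntegrable D volume x₀ b := (hDcont.mono hsub').intervalIntegrable
  have hgint : IntervalIntegrable g volume x₀ b :=
    ((continuous_const.add (continuous_const.mul ((continuous_id.sub continuous_const).pow 2))).intervalIntegrable _ _)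
  have hEDFon : IntegrableOn EDF (Icc a b) volume := by
    have hfin : IsFiniteMeasure (volume.restrict (Icc a b)) := by
      constructor
      rw [Measure.restrict_apply_univ]
      simp [Real.volume_Icc]
    refine ⟨hmeas.aestronglyMeasurable, ?_⟩
    exact HasFiniteIntegral.of_bounded (C := C)
      ((ae_restrict_iff' measurableSet_Icc).2 (ae_of_all _ fun x hx => by
        simpa [Real.norm_eq_abs] using hC x hx))
  have hEDFint : IntervalIntegrable EDF volume x₀ b := (hEDFon.mono_set hsub').intervalIntegrable
  -- integral computations
  have h7 : 0 ≤ ∫ t in x₀..b, ψ t := intervalIntegral.integral_nonneg hx₀b.le hψnn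
  have h8 : (∫ t in x₀..b, ψ t) = (∫ t in x₀..b, D t) - ∫ t in x₀..b, g t :=
    intervalIntegral.integral_sub hDint hgint
  have hsq : (∫ t in x₀..b, (t - x₀) ^ 2) = (b - x₀) ^ 3 / 3 := by
    rw [intervalIntegral.integral_comp_sub_right (fun u => u ^ 2) x₀]
    rw [integral_pow]
    norm_num
  have hgval : (∫ t in x₀..b, g t) = (b - x₀) * D x₀ + c * ((b - x₀) ^ 3 / 3) := by
    simp only [hgdef]
    have hint2 : IntervalIntegrable (fun t : ℝ => c * (t - x₀) ^ 2) volume x₀ b := by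
      apply Continuous.intervalIntegrable
      exact continuous_const.mul ((continuous_id.sub continuous_const).pow 2)
    rw [intervalIntegral.integral_add (intervalIntegrable_const) hint2,
      intervalIntegral.integral_const, intervalIntegral.integral_const_mul, hsq]
    simp [smul_eq_mul]
  have hDsplit : (∫ t in x₀..b, D t) = (∫ t in x₀..b, Fhat t) - ∫ t in x₀..b, F t :=
    intervalIntegral.integral_sub hFhatint hFint
  have h6' := h6 x₀ ⟨hx₀.1, hx₀b.le⟩
  have h9 : (∫ t in x₀..b, D t) ≤ ∫ t in x₀..b, (EDF t - F t) := by
    rw [hDsplit, intervalIntegral.integral_sub hEDFint hFint]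
    linarith
  have h10 : (∫ t in x₀..b, (EDF t - F t)) ≤ (b - x₀) * M := by
    have := intervalIntegral.integral_mono_on hx₀b.le (hEDFint.sub hFint)
      (intervalIntegrable_const (c := M))
      (fun x hx => hMb x (Icc_subset_Icc hx₀.1 le_rfl hx))
    simpa [smul_eq_mul] using this
  have hc3 : c * ((b - x₀) ^ 3 / 3) = (D b - D x₀) * (b - x₀) / 3 := by
    rw [hcdef]; field_simp
  have hfinal : (b - x₀) * D x₀ + (D b - D x₀) * (b - x₀) / 3 ≤ (b - x₀) * M := by
    rw [← hc3]
    linarith [h7, h8, hgval, h9, h10]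
  have h12 : D x₀ + (D b - D x₀) / 3 ≤ M := by
    have h13 : (b - x₀) * (D x₀ + (D b - D x₀) / 3) ≤ (b - x₀) * M := by
      have : (b - x₀) * (D x₀ + (D b - D x₀) / 3)
          = (b - x₀) * D x₀ + (D b - D x₀) * (b - x₀) / 3 := by ring
      linarith [hfinal]
    exact le_of_mul_le_mul_left h13 hbx0
  linarith [h12, hDb.le, hDb.ge]
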